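/- Let ⪯ be any well-order of ℚ of order type ω and let ⊑ be the tree order of T(ℚ, ≤, ⪯). Then there exists a subset X ⊆ ℚ that is order-isomorphic to (ℚ, ≤) and is an antichain in T(ℚ, ≤, ⪯), i.e., no two distinct elements of X are ⊑-comparable. -/
import Mathlib


universe u


namespace AC

variable (pre : ℚ → ℚ → Prop)

open Classical in
noncomputable def pick (F : Finset ℚ) (u v : ℚ) : ℚ :=
  if h : ∃ x, u < x ∧ x < v ∧ x ∉ F ∧ ∀ y ∈ F, pre y x then h.choose else 0

variable (hlin : IsLinearOrder ℚ pre) (homega : ∀ x : ℚ, {y : ℚ | pre y x}.Finite)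

include hlin homega

lemma pick_exists (F : Finset ℚ) {u v : ℚ} (h : u < v) :
    ∃ x, u < x ∧ x < v ∧ x ∉ F ∧ ∀ y ∈ F, pre y x := by
  have hbad : ((F : Set ℚ) ∪ ⋃ y ∈ (F : Set ℚ), {z | ¬ pre y z}).Finite := by
    refine Set.Finite.union F.finite_toSet (Set.Finite.biUnion F.finite_toSet ?_)
    intro y _
    refine (homega y).subset ?_
    intro z hz
    rcases hlin.total z y with h' | h'
    · exact h'
    · exact absurd h' hz
  obtain ⟨x, hx⟩ := ((Set.Ioo_infinite h).diff hbad).nonempty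
  refine ⟨x, hx.1.1, hx.1.2, ?_, ?_⟩
  · intro hm; exact hx.2 (Set.mem_union_left _ hm)
  · intro y hy
    by_contra hc
    exact hx.2 (Set.mem_union_right _ (Set.mem_biUnion hy hc))

lemma pick_spec (F : Finset ℚ) {u v : ℚ} (h : u < v) :
    u < pick pre F u v ∧ pick pre F u v < v ∧ pick pre F u v ∉ F ∧
      ∀ y ∈ F, pre y (pick pre F u v) := by
  have h' := pick_exists pre hlin homega F h
  rw [pick, dif_pos h']
  exact h'.choose_spec

end AC

namespace AC2
open AC

variable (pre : ℚ → ℚ → Prop)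

structure Node where
  u : ℚ
  wL : ℚ
  x : ℚ
  wR : ℚ
  v : ℚ

def Node.pts (n : Node) : Finset ℚ := {n.u, n.wL, n.x, n.wR, n.v}

noncomputable def mkNode (F : Finset ℚ) (a b : ℚ) : Node :=
  let wL := pick pre F a b
  let wR := pick pre (insert wL F) wL b
  let x := pick pre (insert wL (insert wR F)) wL wR
  ⟨a, wL, x, wR, b⟩

variable (hlin : IsLinearOrder ℚ pre) (homega : ∀ x : ℚ, {y : ℚ | pre y x}.Finite)

include hlin homega

lemma mkNode_spec (F : Finset ℚ) {a b : ℚ} (h : a < b) :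
    (mkNode pre F a b).u = a ∧ (mkNode pre F a b).v = b ∧
    a < (mkNode pre F a b).wL ∧ (mkNode pre F a b).wL < (mkNode pre F a b).x ∧
    (mkNode pre F a b).x < (mkNode pre F a b).wR ∧ (mkNode pre F a b).wR < b ∧
    pre (mkNode pre F a b).wL (mkNode pre F a b).x ∧
    (mkNode pre F a b).wL ≠ (mkNode pre F a b).x ∧
    pre (mkNode pre F a b).wR (mkNode pre F a b).x ∧
    (mkNode pre F a b).wR ≠ (mkNode pre F a b).x ∧
    ∀ y ∈ F, (pre y (mkNode pre F a b).wL ∧ y ≠ (mkNode pre F a b).wL) ∧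
      (pre y (mkNode pre F a b).x ∧ y ≠ (mkNode pre F a b).x) ∧
      (pre y (mkNode pre F a b).wR ∧ y ≠ (mkNode pre F a b).wR) := by
  set wL := pick pre F a b with hwLd
  have hwL := pick_spec pre hlin homega F h
  rw [← hwLd] at hwL
  set wR := pick pre (insert wL F) wL b with hwRd
  have hwR := pick_spec pre hlin homega (insert wL F) hwL.2.1
  rw [← hwRd] at hwR
  set x := pick pre (insert wL (insert wR F)) wL wR with hxd
  have hx := pick_spec pre hlin homega (insert wL (insert wR F)) hwR.1
  rw [← hxd] at hx
  have hu : (mkNode pre F a b).u = a := rfl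
  have hv : (mkNode pre F a b).v = b := rfl
  have hL : (mkNode pre F a b).wL = wL := rfl
  have hR : (mkNode pre F a b).wR = wR := rfl
  have hX : (mkNode pre F a b).x = x := rfl
  rw [hu, hv, hL, hR, hX]
  refine ⟨rfl, rfl, hwL.1, hx.1, hx.2.1, hwR.2.1, ?_, ?_, ?_, ?_, ?_⟩
  · exact hx.2.2.2 wL (Finset.mem_insert_self _ _)
  · intro he; exact hx.2.2.1 (he ▸ Finset.mem_insert_self _ _)
  · exact hx.2.2.2 wR (Finset.mem_insert_of_mem (Finset.mem_insert_self _ _))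
  · intro he; exact hx.2.2.1 (he ▸ Finset.mem_insert_of_mem (Finset.mem_insert_self _ _))
  · intro y hy
    have h1 : pre y wL := hwL.2.2.2 y hy
    have h2 : y ≠ wL := fun he => hwL.2.2.1 (he ▸ hy)
    have h3 : pre y wR := hwR.2.2.2 y (Finset.mem_insert_of_mem hy)
    have h4 : y ≠ wR := fun he => hwR.2.2.1 (he ▸ Finset.mem_insert_of_mem hy)
    have h5 : pre y x := hx.2.2.2 y (Finset.mem_insert_of_mem (Finset.mem_insert_of_mem hy))
    have h6 : y ≠ x := fun he => hx.2.2.1 (he ▸ Finset.mem_insert_of_mem (Finset.mem_insert_of_mem hy))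
    exact ⟨⟨h1, h2⟩, ⟨h5, h6⟩, ⟨h3, h4⟩⟩

end AC2

namespace AC2
open AC

variable (pre : ℚ → ℚ → Prop)

noncomputable def node : List Bool → Node
  | [] => mkNode pre ∅ 0 1
  | true :: s => mkNode pre (node s).pts (node s).wR (node s).v
  | false :: s => mkNode pre (node s).pts (node s).u (node s).wL

lemma node_nil : node pre [] = mkNode pre ∅ 0 1 := rfl
lemma node_true (s : List Bool) :
    node pre (true :: s) = mkNode pre (node pre s).pts (node pre s).wR (node pre s).v := rfl
lemma node_false (s : List Bool) :
    node pre (false :: s) = mkNode pre (node pre s).pts (node pre s).u (node pre s).wL := rfl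

lemma x_mem_pts (n : Node) : n.x ∈ n.pts := by simp [Node.pts]
lemma wL_mem_pts (n : Node) : n.wL ∈ n.pts := by simp [Node.pts]
lemma wR_mem_pts (n : Node) : n.wR ∈ n.pts := by simp [Node.pts]

variable (hlin : IsLinearOrder ℚ pre) (homega : ∀ x : ℚ, {y : ℚ | pre y x}.Finite)

include hlin homega

lemma node_lt (s : List Bool) :
    (node pre s).u < (node pre s).wL ∧ (node pre s).wL < (node pre s).x ∧
    (node pre s).x < (node pre s).wR ∧ (node pre s).wR < (node pre s).v := by
  induction s with
  | nil =>
      have h := mkNode_spec pre hlin homega ∅ (show (0:ℚ) < 1 by norm_num)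
      rw [node_nil, h.1, h.2.1]
      exact ⟨h.2.2.1, h.2.2.2.1, h.2.2.2.2.1, h.2.2.2.2.2.1⟩
  | cons b s ih =>
      cases b with
      | true =>
          have h := mkNode_spec pre hlin homega (node pre s).pts ih.2.2.2
          rw [node_true, h.1, h.2.1]
          exact ⟨h.2.2.1, h.2.2.2.1, h.2.2.2.2.1, h.2.2.2.2.2.1⟩
      | false =>
          have h := mkNode_spec pre hlin homega (node pre s).pts ih.1
          rw [node_false, h.1, h.2.1]
          exact ⟨h.2.2.1, h.2.2.2.1, h.2.2.2.2.1, h.2.2.2.2.2.1⟩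

/-- the `x` of a node is pre-above, and distinct from, its own `wL` and `wR`. -/
lemma node_self (s : List Bool) :
    pre (node pre s).wL (node pre s).x ∧ (node pre s).wL ≠ (node pre s).x ∧
    pre (node pre s).wR (node pre s).x ∧ (node pre s).wR ≠ (node pre s).x := by
  cases s with
  | nil =>
      have h := mkNode_spec pre hlin homega ∅ (show (0:ℚ) < 1 by norm_num)
      rw [node_nil]
      exact ⟨h.2.2.2.2.2.2.1, h.2.2.2.2.2.2.2.1, h.2.2.2.2.2.2.2.2.1, h.2.2.2.2.2.2.2.2.2.1⟩
  | cons b s =>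
      have hl := node_lt pre hlin homega s
      cases b with
      | true =>
          have h := mkNode_spec pre hlin homega (node pre s).pts hl.2.2.2
          rw [node_true]
          exact ⟨h.2.2.2.2.2.2.1, h.2.2.2.2.2.2.2.1, h.2.2.2.2.2.2.2.2.1, h.2.2.2.2.2.2.2.2.2.1⟩
      | false =>
          have h := mkNode_spec pre hlin homega (node pre s).pts hl.1
          rw [node_false]
          exact ⟨h.2.2.2.2.2.2.1, h.2.2.2.2.2.2.2.1, h.2.2.2.2.2.2.2.2.1, h.2.2.2.2.2.2.2.2.2.1⟩

/-- new points of a child node are pre-above all points of the parent. -/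
lemma node_child (b : Bool) (s : List Bool) :
    ∀ p ∈ (node pre s).pts,
      (pre p (node pre (b :: s)).wL ∧ p ≠ (node pre (b :: s)).wL) ∧
      (pre p (node pre (b :: s)).x ∧ p ≠ (node pre (b :: s)).x) ∧
      (pre p (node pre (b :: s)).wR ∧ p ≠ (node pre (b :: s)).wR) := by
  have hl := node_lt pre hlin homega s
  cases b with
  | true =>
      have h := mkNode_spec pre hlin homega (node pre s).pts hl.2.2.2
      rw [node_true]
      exact h.2.2.2.2.2.2.2.2.2.2
  | false =>
      have h := mkNode_spec pre hlin homega (node pre s).pts hl.1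
      rw [node_false]
      exact h.2.2.2.2.2.2.2.2.2.2

end AC2

namespace AC2
open AC

variable (pre : ℚ → ℚ → Prop)

lemma node_true_u (s : List Bool) : (node pre (true :: s)).u = (node pre s).wR := rfl
lemma node_true_v (s : List Bool) : (node pre (true :: s)).v = (node pre s).v := rfl
lemma node_false_u (s : List Bool) : (node pre (false :: s)).u = (node pre s).u := rfl
lemma node_false_v (s : List Bool) : (node pre (false :: s)).v = (node pre s).wL := rfl

variable (hlin : IsLinearOrder ℚ pre) (homega : ∀ x : ℚ, {y : ℚ | pre y x}.Finite)

include hlin homega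

lemma node_nest (t₁ : List Bool) (s : List Bool) :
    (node pre s).u ≤ (node pre (t₁ ++ s)).u ∧ (node pre (t₁ ++ s)).v ≤ (node pre s).v := by
  induction t₁ with
  | nil => exact ⟨le_refl _, le_refl _⟩
  | cons c t₁ ih =>
      have hl := node_lt pre hlin homega (t₁ ++ s)
      have : (c :: t₁) ++ s = c :: (t₁ ++ s) := rfl
      rw [this]
      cases c with
      | true =>
          rw [node_true_u, node_true_v]
          constructor
          · have := hl.1; have := hl.2.1; have := hl.2.2.1; have := ih.1; linarith
          · exact ih.2
      | false =>
          rw [node_false_u, node_false_v]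
          constructor
          · exact ih.1
          · have := hl.1; have := hl.2.1; have := hl.2.2.1; have := hl.2.2.2; have := ih.2; linarith

lemma node_anc (t₁ : List Bool) (b : Bool) (s : List Bool) :
    ∀ p ∈ (node pre s).pts,
      (pre p (node pre (t₁ ++ b :: s)).wL ∧ p ≠ (node pre (t₁ ++ b :: s)).wL) ∧
      (pre p (node pre (t₁ ++ b :: s)).x ∧ p ≠ (node pre (t₁ ++ b :: s)).x) ∧
      (pre p (node pre (t₁ ++ b :: s)).wR ∧ p ≠ (node pre (t₁ ++ b :: s)).wR) := by
  induction t₁ with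
  | nil => exact node_child pre hlin homega b s
  | cons c t₁ ih =>
      intro p hp
      have heq : (c :: t₁) ++ b :: s = c :: (t₁ ++ b :: s) := rfl
      rw [heq]
      set P := node pre (t₁ ++ b :: s) with hP
      have hpx : pre p P.x ∧ p ≠ P.x := (ih p hp).2.1
      have hc := node_child pre hlin homega c (t₁ ++ b :: s) P.x (x_mem_pts P)
      have comb : ∀ q, pre P.x q → P.x ≠ q → pre p q ∧ p ≠ q := by
        intro q h1 h2
        refine ⟨hlin.trans _ _ _ hpx.1 h1, fun he => ?_⟩
        exact h2 (hlin.antisymm _ _ h1 (he ▸ hpx.1))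
      exact ⟨comb _ hc.1.1 hc.1.2, comb _ hc.2.1.1 hc.2.1.2, comb _ hc.2.2.1 hc.2.2.2⟩

end AC2

namespace AC2

lemma list_tri_pre : ∀ s t : List Bool,
    s = t ∨ (∃ b t₁, t = s ++ b :: t₁) ∨ (∃ a s₁, s = t ++ a :: s₁) ∨
      (∃ r a b s₁ t₁, a ≠ b ∧ s = r ++ a :: s₁ ∧ t = r ++ b :: t₁) := by
  intro s
  induction s with
  | nil =>
      intro t
      cases t with
      | nil => exact Or.inl rfl
      | cons b t₁ => exact Or.inr (Or.inl ⟨b, t₁, rfl⟩)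
  | cons a s' ih =>
      intro t
      cases t with
      | nil => exact Or.inr (Or.inr (Or.inl ⟨a, s', rfl⟩))
      | cons b t' =>
          by_cases hab : a = b
          · subst hab
            rcases ih t' with h | ⟨c, t₁, h⟩ | ⟨c, s₁, h⟩ | ⟨r, c, d, s₁, t₁, hcd, h1, h2⟩
            · exact Or.inl (by rw [h])
            · exact Or.inr (Or.inl ⟨c, t₁, by rw [h]; rfl⟩)
            · exact Or.inr (Or.inr (Or.inl ⟨c, s₁, by rw [h]; rfl⟩))
            · exact Or.inr (Or.inr (Or.inr ⟨a :: r, c, d, s₁, t₁, hcd, by rw [h1]; rfl, by rw [h2]; rfl⟩))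
          · exact Or.inr (Or.inr (Or.inr ⟨[], a, b, s', t', hab, rfl, rfl⟩))

lemma list_tri (s t : List Bool) :
    s = t ∨ (∃ t₁ b, t = t₁ ++ b :: s) ∨ (∃ s₁ a, s = s₁ ++ a :: t) ∨
      (∃ r a b s₁ t₁, a ≠ b ∧ s = s₁ ++ a :: r ∧ t = t₁ ++ b :: r) := by
  rcases list_tri_pre s.reverse t.reverse with h | ⟨b, t₁, h⟩ | ⟨a, s₁, h⟩ |
      ⟨r, a, b, s₁, t₁, hab, h1, h2⟩
  · exact Or.inl (List.reverse_injective h)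
  · refine Or.inr (Or.inl ⟨t₁.reverse, b, ?_⟩)
    have := congrArg List.reverse h
    simpa using this
  · refine Or.inr (Or.inr (Or.inl ⟨s₁.reverse, a, ?_⟩))
    have := congrArg List.reverse h
    simpa using this
  · refine Or.inr (Or.inr (Or.inr ⟨r.reverse, a, b, s₁.reverse, t₁.reverse, hab, ?_, ?_⟩))
    · have := congrArg List.reverse h1
      simpa using this
    · have := congrArg List.reverse h2
      simpa using this

end AC2

namespace AC2
open AC

variable (pre : ℚ → ℚ → Prop)
variable (hlin : IsLinearOrder ℚ pre) (homega : ∀ x : ℚ, {y : ℚ | pre y x}.Finite)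

include hlin homega

lemma anc_witness (t₁ : List Bool) (b : Bool) (s : List Bool) :
    ∃ c, c ≠ (node pre s).x ∧ c ≠ (node pre (t₁ ++ b :: s)).x ∧
      ((node pre (t₁ ++ b :: s)).x < c ∧ c < (node pre s).x ∨
       (node pre s).x < c ∧ c < (node pre (t₁ ++ b :: s)).x) ∧
      pre c (node pre s).x ∧ pre c (node pre (t₁ ++ b :: s)).x := by
  have hls := node_lt pre hlin homega s
  have hlt := node_lt pre hlin homega (t₁ ++ b :: s)
  have hself := node_self pre hlin homega s
  cases b with
  | false =>
      have hanc := node_anc pre hlin homega t₁ false s (node pre s).wL (wL_mem_pts _)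
      have hnest := (node_nest pre hlin homega t₁ (false :: s)).2
      rw [node_false_v] at hnest
      refine ⟨(node pre s).wL, hself.2.1, hanc.2.1.2, Or.inl ⟨?_, hls.2.1⟩, hself.1, hanc.2.1.1⟩
      have h1 := hlt.2.2.1
      have h2 := hlt.2.2.2
      linarith
  | true =>
      have hanc := node_anc pre hlin homega t₁ true s (node pre s).wR (wR_mem_pts _)
      have hnest := (node_nest pre hlin homega t₁ (true :: s)).1
      rw [node_true_u] at hnest
      refine ⟨(node pre s).wR, hself.2.2.2, hanc.2.1.2, Or.inr ⟨hls.2.2.1, ?_⟩,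
        hself.2.2.1, hanc.2.1.1⟩
      have h1 := hlt.1
      have h2 := hlt.2.1
      linarith

lemma incomp_witness (r : List Bool) (s₁ t₁ : List Bool) :
    ∃ c, c ≠ (node pre (s₁ ++ false :: r)).x ∧ c ≠ (node pre (t₁ ++ true :: r)).x ∧
      (node pre (s₁ ++ false :: r)).x < c ∧ c < (node pre (t₁ ++ true :: r)).x ∧
      pre c (node pre (s₁ ++ false :: r)).x ∧ pre c (node pre (t₁ ++ true :: r)).x := by
  have hlr := node_lt pre hlin homega r
  have hls := node_lt pre hlin homega (s₁ ++ false :: r)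
  have hlt := node_lt pre hlin homega (t₁ ++ true :: r)
  have hancs := node_anc pre hlin homega s₁ false r (node pre r).x (x_mem_pts _)
  have hanct := node_anc pre hlin homega t₁ true r (node pre r).x (x_mem_pts _)
  have hnests := (node_nest pre hlin homega s₁ (false :: r)).2
  rw [node_false_v] at hnests
  have hnestt := (node_nest pre hlin homega t₁ (true :: r)).1
  rw [node_true_u] at hnestt
  refine ⟨(node pre r).x, hancs.2.1.2, hanct.2.1.2,
    ?_, ?_, hancs.2.1.1, hanct.2.1.1⟩
  · have h1 := hls.2.2.1
    have h2 := hls.2.2.2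
    have h3 := hlr.2.1
    linarith
  · have h1 := hlt.1
    have h2 := hlt.2.1
    have h3 := hlr.2.2.1
    linarith

lemma main_witness (s t : List Bool) (h : (node pre s).x ≠ (node pre t).x) :
    ∃ c, c ≠ (node pre s).x ∧ c ≠ (node pre t).x ∧
      ((node pre s).x < c ∧ c < (node pre t).x ∨ (node pre t).x < c ∧ c < (node pre s).x) ∧
      pre c (node pre s).x ∧ pre c (node pre t).x := by
  rcases list_tri s t with heq | ⟨t₁, b, ht⟩ | ⟨s₁, a, hs⟩ | ⟨r, a, b, s₁, t₁, hab, hs, ht⟩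
  · exact absurd (by rw [heq]) h
  · subst ht
    obtain ⟨c, h1, h2, h3, h4, h5⟩ := anc_witness pre hlin homega t₁ b s
    exact ⟨c, h1, h2, h3.symm, h4, h5⟩
  · subst hs
    obtain ⟨c, h1, h2, h3, h4, h5⟩ := anc_witness pre hlin homega s₁ a t
    exact ⟨c, h2, h1, h3, h5, h4⟩
  · subst hs; subst ht
    cases a with
    | false =>
        have hb : b = true := by cases b <;> simp_all
        subst hb
        obtain ⟨c, h1, h2, h3, h4, h5, h6⟩ := incomp_witness pre hlin homega r s₁ t₁
        exact ⟨c, h1, h2, Or.inl ⟨h3, h4⟩, h5, h6⟩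
    | true =>
        have hb : b = false := by cases b <;> simp_all
        subst hb
        obtain ⟨c, h1, h2, h3, h4, h5, h6⟩ := incomp_witness pre hlin homega r t₁ s₁
        exact ⟨c, h2, h1, Or.inr ⟨h3, h4⟩, h6, h5⟩

end AC2

namespace AC2
open AC

variable (pre : ℚ → ℚ → Prop)
variable (hlin : IsLinearOrder ℚ pre) (homega : ∀ x : ℚ, {y : ℚ | pre y x}.Finite)

include hlin homega

lemma gt_witness (s : List Bool) : (node pre s).x < (node pre (true :: s)).x := by
  have hls := node_lt pre hlin homega s
  have hlt := node_lt pre hlin homega (true :: s)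
  have hu : (node pre (true :: s)).u = (node pre s).wR := node_true_u pre s
  have h1 := hlt.1
  have h2 := hlt.2.1
  have h3 := hls.2.2.1
  rw [hu] at h1
  linarith

lemma lt_witness (s : List Bool) : (node pre (false :: s)).x < (node pre s).x := by
  have hls := node_lt pre hlin homega s
  have hlt := node_lt pre hlin homega (false :: s)
  have hv : (node pre (false :: s)).v = (node pre s).wL := node_false_v pre s
  have h1 := hlt.2.2.1
  have h2 := hlt.2.2.2
  have h3 := hls.2.1
  rw [hv] at h2
  linarith

lemma dense_witness (s t : List Bool) (h : (node pre s).x < (node pre t).x) :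
    ∃ u : List Bool, (node pre s).x < (node pre u).x ∧ (node pre u).x < (node pre t).x := by
  rcases list_tri s t with heq | ⟨t₁, b, ht⟩ | ⟨s₁, a, hs⟩ | ⟨r, a, b, s₁, t₁, hab, hs, ht⟩
  · rw [heq] at h; exact absurd h (lt_irrefl _)
  · subst ht
    cases b with
    | false =>
        exfalso
        have hls := node_lt pre hlin homega s
        have hlt := node_lt pre hlin homega (t₁ ++ false :: s)
        have hnest := (node_nest pre hlin homega t₁ (false :: s)).2
        rw [node_false_v] at hnest
        have h1 := hlt.2.2.1
        have h2 := hlt.2.2.2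
        have h3 := hls.2.1
        linarith
    | true =>
        refine ⟨false :: (t₁ ++ true :: s), ?_, ?_⟩
        · have hls := node_lt pre hlin homega s
          have hlu := node_lt pre hlin homega (false :: (t₁ ++ true :: s))
          have hnest := (node_nest pre hlin homega t₁ (true :: s)).1
          rw [node_true_u] at hnest
          have hu : (node pre (false :: (t₁ ++ true :: s))).u = (node pre (t₁ ++ true :: s)).u :=
            node_false_u pre _
          have h1 := hlu.1
          have h2 := hlu.2.1
          have h3 := hls.2.2.1
          rw [hu] at h1
          linarith
        · have hlt := node_lt pre hlin homega (t₁ ++ true :: s)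
          have hlu := node_lt pre hlin homega (false :: (t₁ ++ true :: s))
          have hv : (node pre (false :: (t₁ ++ true :: s))).v = (node pre (t₁ ++ true :: s)).wL :=
            node_false_v pre _
          have h1 := hlu.2.2.1
          have h2 := hlu.2.2.2
          have h3 := hlt.2.1
          rw [hv] at h2
          linarith
  · subst hs
    cases a with
    | true =>
        exfalso
        have hlt := node_lt pre hlin homega t
        have hls := node_lt pre hlin homega (s₁ ++ true :: t)
        have hnest := (node_nest pre hlin homega s₁ (true :: t)).1
        rw [node_true_u] at hnest
        have h1 := hls.1
        have h2 := hls.2.1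
        have h3 := hlt.2.2.1
        linarith
    | false =>
        refine ⟨true :: (s₁ ++ false :: t), ?_, ?_⟩
        · have hls := node_lt pre hlin homega (s₁ ++ false :: t)
          have hlu := node_lt pre hlin homega (true :: (s₁ ++ false :: t))
          have hu : (node pre (true :: (s₁ ++ false :: t))).u = (node pre (s₁ ++ false :: t)).wR :=
            node_true_u pre _
          have h1 := hlu.1
          have h2 := hlu.2.1
          have h3 := hls.2.2.1
          rw [hu] at h1
          linarith
        · have hlt := node_lt pre hlin homega t
          have hlu := node_lt pre hlin homega (true :: (s₁ ++ false :: t))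
          have hnest := (node_nest pre hlin homega s₁ (false :: t)).2
          rw [node_false_v] at hnest
          have hv : (node pre (true :: (s₁ ++ false :: t))).v = (node pre (s₁ ++ false :: t)).v :=
            node_true_v pre _
          have h1 := hlu.2.2.1
          have h2 := hlu.2.2.2
          have h3 := hlt.2.1
          rw [hv] at h2
          linarith
  · subst hs; subst ht
    cases a with
    | false =>
        have hb : b = true := by cases b <;> simp_all
        subst hb
        refine ⟨r, ?_, ?_⟩
        · have hlr := node_lt pre hlin homega r
          have hls := node_lt pre hlin homega (s₁ ++ false :: r)
          have hnest := (node_nest pre hlin homega s₁ (false :: r)).2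
          rw [node_false_v] at hnest
          have h1 := hls.2.2.1
          have h2 := hls.2.2.2
          have h3 := hlr.2.1
          linarith
        · have hlr := node_lt pre hlin homega r
          have hlt := node_lt pre hlin homega (t₁ ++ true :: r)
          have hnest := (node_nest pre hlin homega t₁ (true :: r)).1
          rw [node_true_u] at hnest
          have h1 := hlt.1
          have h2 := hlt.2.1
          have h3 := hlr.2.2.1
          linarith
    | true =>
        have hb : b = false := by cases b <;> simp_all
        subst hb
        obtain ⟨c, h1, h2, h3, h4, h5, h6⟩ := incomp_witness pre hlin homega r t₁ s₁
        exfalso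
        linarith

end AC2




/-- `c` is strictly `le`-between `a` and `b`. -/
def strictlyBetween {α : Type u} (le : α → α → Prop) (a c b : α) : Prop :=
  (le a c ∧ le c b ∧ c ≠ a ∧ c ≠ b) ∨ (le b c ∧ le c a ∧ c ≠ a ∧ c ≠ b)

/-- The tree relation `⊑` of `T(V, ≤, ⪯)`: `a ⊑ b` iff `a ⪯ b` and there is no `c`
strictly `≤`-between `a` and `b` with `c ⪯ a` and `c ⪯ b`. -/
def treeRel {α : Type u} (le pre : α → α → Prop) (a b : α) : Prop :=
  pre a b ∧ ¬∃ c, strictlyBetween le a c b ∧ pre c a ∧ pre c b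

/-- `s` is well-ordered by `r` (`r` is a reflexive `≤`-style relation):
`r` is total on `s` and every nonempty subset of `s` has an `r`-least element. -/
def IsWellOrderedOn {α : Type u} (r : α → α → Prop) (s : Set α) : Prop :=
  (∀ a ∈ s, ∀ b ∈ s, r a b ∨ r b a) ∧
  ∀ t : Set α, t ⊆ s → t.Nonempty → ∃ m ∈ t, ∀ x ∈ t, r m x

/-- `r` is a (set-theoretic, rooted) tree order: a partial order with a minimum element
in which the set of predecessors of every element is well-ordered. -/
def IsTreeOrder {α : Type u} (r : α → α → Prop) : Prop :=
  IsPartialOrder α r ∧ (∃ root, ∀ a, r root a) ∧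
  ∀ a, IsWellOrderedOn r {b | r b a}

/-- `a` is a leaf of the tree order `r`: it has no strict successor. -/
def isLeaf {α : Type u} (r : α → α → Prop) (a : α) : Prop := ∀ b, r a b → b = a

/-- `b` is a son (immediate successor) of `a` in the tree order `r`. -/
def isSon {α : Type u} (r : α → α → Prop) (a b : α) : Prop :=
  r a b ∧ a ≠ b ∧ ∀ c, r a c → r c b → c = a ∨ c = b

/-- `a` has exactly two sons in the tree order `r`. -/
def hasTwoSons {α : Type u} (r : α → α → Prop) (a : α) : Prop :=
  ∃ b c, b ≠ c ∧ isSon r a b ∧ isSon r a c ∧ ∀ d, isSon r a d → d = b ∨ d = c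

/-- `(le, pre)` is a compatible pair of orders: `le` is a linear order, `pre` a preorder,
`T(V, le, pre)` is defined (i.e. `treeRel le pre` is a tree order), and every element
is either a leaf or has exactly two sons. -/
def CompatPair {α : Type u} (le pre : α → α → Prop) : Prop :=
  IsLinearOrder α le ∧ IsPreorder α pre ∧ IsTreeOrder (treeRel le pre) ∧
  ∀ a, isLeaf (treeRel le pre) a ∨ hasTwoSons (treeRel le pre) a

/-- `m` is the meet of `a` and `b` in the tree order `r`. -/
def isMeet {α : Type u} (r : α → α → Prop) (a b m : α) : Prop :=
  r m a ∧ r m b ∧ ∀ x, r x a → r x b → r x m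

/-- `C` is closed under the meet operation of the tree order `r`. -/
def MeetClosed {α : Type u} (r : α → α → Prop) (C : Set α) : Prop :=
  ∀ a ∈ C, ∀ b ∈ C, ∀ m, isMeet r a b m → m ∈ C

open AC AC2 in
/-- For any well-order `⪯` of `ℚ` of order type `ω`, there is a subset of `ℚ`
order-isomorphic to `(ℚ, ≤)` that is an antichain in `T(ℚ, ≤, ⪯)`. -/
theorem exists_antichain_copy (pre : ℚ → ℚ → Prop)
    (hlin : IsLinearOrder ℚ pre) (homega : ∀ x : ℚ, {y : ℚ | pre y x}.Finite) :
    ∃ X : Set ℚ, Nonempty (↥X ≃o ℚ) ∧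
      ∀ a ∈ X, ∀ b ∈ X, a ≠ b →
        ¬ treeRel (· ≤ ·) pre a b ∧ ¬ treeRel (· ≤ ·) pre b a := by

  refine ⟨Set.range (fun s => (node pre s).x), ?_, ?_⟩
  · haveI : Nonempty ↥(Set.range (fun s => (node pre s).x)) := ⟨⟨_, ⟨[], rfl⟩⟩⟩
    haveI : DenselyOrdered ↥(Set.range (fun s => (node pre s).x)) := by
      constructor
      rintro ⟨a, s, rfl⟩ ⟨b, t, rfl⟩ hab
      have h : (node pre s).x < (node pre t).x := hab
      obtain ⟨u, hu1, hu2⟩ := dense_witness pre hlin homega s t h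
      exact ⟨⟨(node pre u).x, ⟨u, rfl⟩⟩, hu1, hu2⟩
    haveI : NoMaxOrder ↥(Set.range (fun s => (node pre s).x)) := by
      constructor
      rintro ⟨a, s, rfl⟩
      exact ⟨⟨(node pre (true :: s)).x, ⟨true :: s, rfl⟩⟩, gt_witness pre hlin homega s⟩
    haveI : NoMinOrder ↥(Set.range (fun s => (node pre s).x)) := by
      constructor
      rintro ⟨a, s, rfl⟩
      exact ⟨⟨(node pre (false :: s)).x, ⟨false :: s, rfl⟩⟩, lt_witness pre hlin homega s⟩
    exact Order.iso_of_countable_dense _ ℚ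
  · rintro a ⟨s, rfl⟩ b ⟨t, rfl⟩ hab
    obtain ⟨c, h1, h2, h3, h4, h5⟩ := main_witness pre hlin homega s t hab
    constructor
    · rintro ⟨-, hno⟩
      refine hno ⟨c, ?_, h4, h5⟩
      rcases h3 with ⟨hl, hr⟩ | ⟨hl, hr⟩
      · exact Or.inl ⟨le_of_lt hl, le_of_lt hr, h1, h2⟩
      · exact Or.inr ⟨le_of_lt hl, le_of_lt hr, h1, h2⟩
    · rintro ⟨-, hno⟩
      refine hno ⟨c, ?_, h5, h4⟩
      rcases h3 with ⟨hl, hr⟩ | ⟨hl, hr⟩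
      · exact Or.inr ⟨le_of_lt hl, le_of_lt hr, h2, h1⟩
      · exact Or.inl ⟨le_of_lt hl, le_of_lt hr, h2, h1⟩
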